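/- Let γ, δ be 0-1 vectors of length n, both with total sum n−K (0 ≤ K ≤ n). The (n+2)×(n+2) azure skew mirror instance ASM(γ,δ) of the 3-color consistency problem is consistent if and only if γ ⪰ δ^R. -/

import Mathlib

open Finset



lemma ite10_eq_one {c : Prop} [Decidable c] : (if c then (1:ℕ) else 0) = 1 ↔ c := by
  split_ifs with h <;> simp [h]

lemma card_ones (n : ℕ) (δ : ℕ → ℕ) (hδ : ∀ i ∈ Icc 1 n, δ i ≤ 1) :
    ((Icc 1 n).filter (fun j => δ j = 1)).card = ∑ j ∈ Icc 1 n, δ j := by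
  rw [card_filter]
  refine Finset.sum_congr rfl fun j hj => ?_
  have := hδ j hj
  split_ifs with h <;> omega

lemma card_zeros (n : ℕ) (δ : ℕ → ℕ) (hδ : ∀ i ∈ Icc 1 n, δ i ≤ 1) :
    ((Icc 1 n).filter (fun j => δ j = 0)).card + ∑ j ∈ Icc 1 n, δ j = n := by
  have h1 : ((Icc 1 n).filter (fun j => ¬ δ j = 0)).card
      = ((Icc 1 n).filter (fun j => δ j = 1)).card := by
    apply congrArg
    apply filter_congr
    intro j hj
    have := hδ j hj
    constructor <;> intro h <;> omega
  have h2 := Finset.card_filter_add_card_filter_not (s := Icc 1 n)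
    (p := fun j => δ j = 0)
  rw [card_ones n δ hδ] at h1
  rw [h1] at h2
  simpa [Nat.card_Icc] using h2

def Zc (f : ℕ → ℕ) (i : ℕ) : ℕ := ((Icc 1 i).filter (fun t => f t = 0)).card

lemma Zc_mono (f : ℕ → ℕ) {a b : ℕ} (h : a ≤ b) : Zc f a ≤ Zc f b :=
  card_le_card (filter_subset_filter _ (Icc_subset_Icc le_rfl h))

lemma Zc_succ (f : ℕ → ℕ) (j : ℕ) (hj : 1 ≤ j) :
    Zc f j = Zc f (j-1) + (if f j = 0 then 1 else 0) := by
  have h : Icc 1 j = insert j (Icc 1 (j-1)) := by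
    ext x; simp [mem_Icc, mem_insert]; omega
  have hnot : j ∉ Icc 1 (j-1) := by simp [mem_Icc]; omega
  unfold Zc
  rw [h, filter_insert]
  split_ifs with hf
  · rw [card_insert_of_notMem (fun hmem => hnot (mem_of_mem_filter _ hmem))]
  · rfl

lemma Zc_sum (n : ℕ) (δ : ℕ → ℕ) (hδ : ∀ i ∈ Icc 1 n, δ i ≤ 1) :
    Zc δ n + ∑ j ∈ Icc 1 n, δ j = n := card_zeros n δ hδ


section
variable {n K : ℕ} {δ : ℕ → ℕ}

lemma Zc_total (hK : K ≤ n) (hδ : ∀ i ∈ Icc 1 n, δ i ≤ 1)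
    (hδs : ∑ i ∈ Icc 1 n, δ i = n - K) : Zc δ n = K := by
  have := Zc_sum n δ hδ; omega

lemma Zc_bounds (hK : K ≤ n) (hδ : ∀ i ∈ Icc 1 n, δ i ≤ 1)
    (hδs : ∑ i ∈ Icc 1 n, δ i = n - K) {j : ℕ} (hj : j ∈ Icc 1 n) (h0 : δ j = 0) :
    1 ≤ Zc δ j ∧ Zc δ j ≤ K := by
  simp only [mem_Icc] at hj
  have h1 := Zc_succ δ j hj.1
  rw [if_pos h0] at h1
  have h2 := Zc_mono δ hj.2
  have h3 := Zc_total hK hδ hδs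
  omega

lemma Zc_strict (hK : K ≤ n) {a b : ℕ} (ha : 1 ≤ a) (hab : a < b) (h0 : δ b = 0) :
    Zc δ a < Zc δ b := by
  have h1 := Zc_succ δ b (by omega)
  rw [if_pos h0] at h1
  have h2 := Zc_mono δ (show a ≤ b - 1 by omega)
  omega

lemma exists_unique_zero (hK : K ≤ n) (hδ : ∀ i ∈ Icc 1 n, δ i ≤ 1)
    (hδs : ∑ i ∈ Icc 1 n, δ i = n - K) :
    ∀ m ∈ Icc 1 K, ∃! j, j ∈ Icc 1 n ∧ δ j = 0 ∧ Zc δ j = m := by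
  intro m hm
  set S := (Icc 1 n).filter (fun j => δ j = 0) with hSdef
  have hScard : S.card = K := by
    have := Zc_sum n δ hδ
    simp only [Zc] at this
    simp only [hSdef]; omega
  have hinj : Set.InjOn (Zc δ) S := by
    intro a ha b hb hab
    simp only [hSdef, mem_coe, mem_filter, mem_Icc] at ha hb
    rcases lt_trichotomy a b with h | h | h
    · exact absurd hab (Nat.ne_of_lt (Zc_strict hK ha.1.1 h hb.2))
    · exact h
    · exact absurd hab.symm (Nat.ne_of_lt (Zc_strict hK hb.1.1 h ha.2))
  have himg : S.image (Zc δ) = Icc 1 K := by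
    apply Finset.eq_of_subset_of_card_le
    · intro m' hm'
      simp only [mem_image] at hm'
      obtain ⟨j, hj, hjm⟩ := hm'
      simp only [hSdef, mem_filter] at hj
      have := Zc_bounds hK hδ hδs hj.1 hj.2
      simp [mem_Icc]; omega
    · rw [Finset.card_image_of_injOn hinj, hScard]
      simp [Nat.card_Icc]
  have hmem : m ∈ S.image (Zc δ) := by rw [himg]; exact hm
  simp only [mem_image] at hmem
  obtain ⟨j, hj, hjm⟩ := hmem
  simp only [hSdef, mem_filter] at hj
  refine ⟨j, ⟨hj.1, hj.2, hjm⟩, ?_⟩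
  intro j' ⟨h1, h2, h3⟩
  have m1 : j' ∈ S := by simp only [hSdef, mem_filter]; exact ⟨h1, h2⟩
  have m2 : j ∈ S := by simp only [hSdef, mem_filter]; exact hj
  exact hinj m1 m2 (by rw [h3, hjm])

end

lemma gauss (m : ℕ) : (∑ i ∈ Icc 1 m, i) * 2 = m * (m+1) := by
  induction m with
  | zero => simp
  | succ k ih =>
    rw [Finset.sum_Icc_succ_top (by omega)]
    ring_nf
    ring_nf at ih
    omega

lemma sum_split (f : ℕ → ℕ) (a b : ℕ) (h : a ≤ b) :
    ∑ i ∈ Icc 1 a, f i + ∑ i ∈ Icc (a+1) b, f i = ∑ i ∈ Icc 1 b, f i := by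
  have e1 : Icc 1 a = Ioc 0 a := by ext x; simp [mem_Icc, mem_Ioc]; omega
  have e2 : Icc (a+1) b = Ioc a b := by ext x; simp [mem_Icc, mem_Ioc]
  have e3 : Icc 1 b = Ioc 0 b := by ext x; simp [mem_Icc, mem_Ioc]; omega
  rw [e1, e2, e3]
  exact Finset.sum_Ioc_consecutive f (by omega) h

lemma sum_rev (δ : ℕ → ℕ) (n k : ℕ) (hk : k ≤ n) :
    ∑ i ∈ Icc 1 k, δ (n - i + 1) = ∑ j ∈ Icc (n-k+1) n, δ j := by
  apply Finset.sum_nbij' (i := fun i => n - i + 1) (j := fun j => n - j + 1)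
  · intro a ha; simp [mem_Icc] at ha ⊢; omega
  · intro a ha; simp [mem_Icc] at ha ⊢; omega
  · intro a ha; simp [mem_Icc] at ha; omega
  · intro a ha; simp [mem_Icc] at ha; omega
  · intro a ha; rfl

lemma Zc_prefix (n : ℕ) (δ : ℕ → ℕ) (hδ : ∀ i ∈ Icc 1 n, δ i ≤ 1) {j : ℕ} (hj : j ≤ n) :
    Zc δ j + ∑ t ∈ Icc 1 j, δ t = j :=
  card_zeros j δ (fun t ht => hδ t (Icc_subset_Icc le_rfl hj ht))

lemma key_geom (n K : ℕ) (hK : K ≤ n) (γ δ : ℕ → ℕ)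
    (hγ : ∀ i ∈ Icc 1 n, γ i ≤ 1) (hδ : ∀ i ∈ Icc 1 n, δ i ≤ 1)
    (hδs : ∑ i ∈ Icc 1 n, δ i = n - K)
    (maj : ∀ k ∈ Icc 1 n, ∑ j ∈ Icc (n-k+1) n, δ j ≤ ∑ i ∈ Icc 1 k, γ i)
    {i j : ℕ} (hi : i ∈ Icc 1 n) (hj : j ∈ Icc 1 n) (hgi : γ i = 0) (hdj : δ j = 0)
    (heq : Zc γ i + Zc δ j = K + 1) : n + 1 ≤ i + j := by
  by_contra hcon
  push_neg at hcon
  have f4 := maj i hi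
  simp only [mem_Icc] at hi hj
  have f1 : Zc γ i + ∑ t ∈ Icc 1 i, γ t = i := Zc_prefix n γ hγ hi.2
  have f2 : Zc δ (n-i) + ∑ t ∈ Icc 1 (n-i), δ t = n - i := Zc_prefix n δ hδ (by omega)
  have f3 : ∑ t ∈ Icc 1 (n-i), δ t + ∑ t ∈ Icc (n-i+1) n, δ t = n - K := by
    rw [sum_split δ (n-i) n (by omega)]; exact hδs
  have f5 : Zc δ j ≤ Zc δ (n-i) := Zc_mono δ (by omega)
  omega

lemma card_filter_split (n : ℕ) (p : ℕ → Prop) [DecidablePred p] :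
    ((Icc 1 (n+2)).filter p).card =
    ((Icc 1 n).filter p).card + (if p (n+1) then 1 else 0) + (if p (n+2) then 1 else 0) := by
  rw [card_filter, card_filter,
    Finset.sum_Icc_succ_top (show 1 ≤ n+1+1 by omega),
    Finset.sum_Icc_succ_top (show 1 ≤ n+1 by omega)]

lemma block_count (n K : ℕ) (γ δ : ℕ → ℕ)
    (keyH : ∀ i j, i ∈ Icc 1 n → j ∈ Icc 1 n → γ i = 0 → δ j = 0 →
      Zc γ i + Zc δ j = K+1 → n+1 ≤ i+j)
    (uniq : ∀ m ∈ Icc 1 K, ∃! j, j ∈ Icc 1 n ∧ δ j = 0 ∧ Zc δ j = m)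
    (zb : ∀ i ∈ Icc 1 n, γ i = 0 → 1 ≤ Zc γ i ∧ Zc γ i ≤ K)
    {i : ℕ} (hi : i ∈ Icc 1 n) (hγi : γ i ≤ 1) :
    ((Icc 1 n).filter (fun j => n+1 ≤ i+j ∧
      ¬(γ i = 0 ∧ δ j = 0 ∧ Zc γ i + Zc δ j = K+1))).card + 1 = i + γ i := by
  simp only [mem_Icc] at hi
  have hstair : (Icc 1 n).filter (fun j => n+1 ≤ i+j) = Icc (n+1-i) n := by
    ext x; simp only [mem_filter, mem_Icc]; omega
  have hstaircard : ((Icc 1 n).filter (fun j => n+1 ≤ i+j)).card = i := by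
    rw [hstair, Nat.card_Icc]; omega
  have hsplit := Finset.card_filter_add_card_filter_not
    (s := (Icc 1 n).filter (fun j => n+1 ≤ i+j))
    (p := fun j => γ i = 0 ∧ δ j = 0 ∧ Zc γ i + Zc δ j = K+1)
  rw [hstaircard, Finset.filter_filter, Finset.filter_filter] at hsplit
  by_cases hg : γ i = 0
  · -- the excluded cell exists uniquely
    have hzb := zb i (by simp [mem_Icc]; omega) hg
    obtain ⟨j₀, ⟨hj₀1, hj₀2, hj₀3⟩, hj₀u⟩ := uniq (K + 1 - Zc γ i) (by simp [mem_Icc]; omega)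
    have hone : ((Icc 1 n).filter (fun j => (n+1 ≤ i+j) ∧
        γ i = 0 ∧ δ j = 0 ∧ Zc γ i + Zc δ j = K+1)) = {j₀} := by
      ext x
      simp only [mem_filter, mem_singleton]
      constructor
      · rintro ⟨hx1, _, _, hx3, hx4⟩
        exact hj₀u x ⟨hx1, hx3, by omega⟩
      · intro h
        rw [h]
        refine ⟨hj₀1, keyH i j₀ (by simp [mem_Icc]; omega) hj₀1 hg hj₀2 (by omega), hg, hj₀2, by omega⟩
    rw [hone] at hsplit
    simp only [card_singleton] at hsplit
    omega
  · have hzero : ((Icc 1 n).filter (fun j => (n+1 ≤ i+j) ∧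
        γ i = 0 ∧ δ j = 0 ∧ Zc γ i + Zc δ j = K+1)) = ∅ := by
      apply filter_eq_empty_iff.2
      intro x _
      rintro ⟨_, h, _⟩
      exact hg h
    rw [hzero] at hsplit
    simp only [card_empty] at hsplit
    interval_cases h : γ i
    · omega
    · omega

def Tmat (n K : ℕ) (γ δ : ℕ → ℕ) (i j : ℕ) : ℕ :=
  if i ≤ n then
    if j ≤ n then
      (if n+1 ≤ i+j ∧ ¬(γ i = 0 ∧ δ j = 0 ∧ Zc γ i + Zc δ j = K+1) then 1 else 0)
    else if j = n+1 then 0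
    else if γ i = 0 then 1 else 2
  else if i = n+1 then (if j = n+1 ∨ j = n+2 then 2 else 0)
  else if j ≤ n then (if δ j = 0 then 1 else 2)
  else 2

lemma Tmat_le3 (n K : ℕ) (γ δ : ℕ → ℕ) (i j : ℕ) : Tmat n K γ δ i j ≤ 3 := by
  unfold Tmat; split_ifs <;> omega

lemma Tmat_ne3 (n K : ℕ) (γ δ : ℕ → ℕ) (i j : ℕ) : Tmat n K γ δ i j ≠ 3 := by
  unfold Tmat; split_ifs <;> omega

lemma Tmat_trans (n K : ℕ) (γ δ : ℕ → ℕ) {i j : ℕ}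
    (hi : i ∈ Icc 1 (n+2)) (hj : j ∈ Icc 1 (n+2)) :
    Tmat n K γ δ i j = Tmat n K δ γ j i := by
  simp only [mem_Icc] at hi hj
  unfold Tmat
  split_ifs <;> omega

lemma Tmat_row_azure (n K : ℕ) (hK : K ≤ n) (γ δ : ℕ → ℕ)
    (hγ : ∀ i ∈ Icc 1 n, γ i ≤ 1) (hδ : ∀ i ∈ Icc 1 n, δ i ≤ 1)
    (hγs : ∑ i ∈ Icc 1 n, γ i = n - K) (hδs : ∑ i ∈ Icc 1 n, δ i = n - K)
    (majI : ∀ k ∈ Icc 1 n, ∑ j ∈ Icc (n-k+1) n, δ j ≤ ∑ i ∈ Icc 1 k, γ i) :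
    ∀ i ∈ Icc 1 (n+2), ((Icc 1 (n+2)).filter (fun j => Tmat n K γ δ i j = 1)).card
      = if i ≤ n then i else if i = n+1 then 0 else K := by
  intro i hi
  rw [card_filter_split]
  simp only [mem_Icc] at hi
  by_cases hin : i ≤ n
  · have hiI : i ∈ Icc 1 n := mem_Icc.2 ⟨hi.1, hin⟩
    have h1 : Tmat n K γ δ i (n+1) = 0 := by
      unfold Tmat; rw [if_pos hin, if_neg (by omega), if_pos rfl]
    have h2 : Tmat n K γ δ i (n+2) = if γ i = 0 then 1 else 2 := by
      unfold Tmat; rw [if_pos hin, if_neg (by omega), if_neg (by omega)]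
    have hfc : (Icc 1 n).filter (fun j => Tmat n K γ δ i j = 1)
        = (Icc 1 n).filter (fun j => n+1 ≤ i+j ∧
            ¬(γ i = 0 ∧ δ j = 0 ∧ Zc γ i + Zc δ j = K+1)) := by
      apply filter_congr
      intro j hj
      have hjn := (mem_Icc.1 hj).2
      unfold Tmat
      rw [if_pos hin, if_pos hjn]
      exact ite10_eq_one
    have hblock := block_count n K γ δ
      (fun a b ha hb => key_geom n K hK γ δ hγ hδ hδs majI ha hb)
      (exists_unique_zero hK hδ hδs)
      (fun a ha h0 => Zc_bounds hK hγ hγs ha h0) hiI (hγ i hiI)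
    rw [hfc, h1, h2, if_pos hin]
    set c := ((Icc 1 n).filter (fun j => n+1 ≤ i+j ∧
      ¬(γ i = 0 ∧ δ j = 0 ∧ Zc γ i + Zc δ j = K+1))).card with hc
    have hgle := hγ i hiI
    by_cases hg : γ i = 0 <;> simp [hg] <;> omega
  · by_cases hi1 : i = n+1
    · subst hi1
      have hbl : (Icc 1 n).filter (fun j => Tmat n K γ δ (n+1) j = 1) = ∅ := by
        apply filter_eq_empty_iff.2
        intro j hj
        have hjn := (mem_Icc.1 hj).2
        unfold Tmat
        rw [if_neg (show ¬(n+1 ≤ n) by omega), if_pos rfl, if_neg (show ¬(j = n+1 ∨ j = n+2) by omega)]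
        omega
      have h1 : Tmat n K γ δ (n+1) (n+1) = 2 := by
        unfold Tmat; rw [if_neg (by omega), if_pos rfl, if_pos (by omega)]
      have h2 : Tmat n K γ δ (n+1) (n+2) = 2 := by
        unfold Tmat; rw [if_neg (by omega), if_pos rfl, if_pos (by omega)]
      rw [hbl, h1, h2]
      simp [show ¬(n+1 ≤ n) by omega]
    · have hi2 : i = n+2 := by omega
      subst hi2
      have hbl : (Icc 1 n).filter (fun j => Tmat n K γ δ (n+2) j = 1)
          = (Icc 1 n).filter (fun j => δ j = 0) := by
        apply filter_congr
        intro j hj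
        have hjn := (mem_Icc.1 hj).2
        unfold Tmat
        rw [if_neg (show ¬(n+2 ≤ n) by omega), if_neg (show ¬(n+2 = n+1) by omega),
          if_pos hjn]
        split_ifs with h0 <;> simp [h0]
      have h1 : Tmat n K γ δ (n+2) (n+1) = 2 := by
        unfold Tmat; rw [if_neg (by omega), if_neg (by omega), if_neg (by omega)]
      have h2 : Tmat n K γ δ (n+2) (n+2) = 2 := by
        unfold Tmat; rw [if_neg (by omega), if_neg (by omega), if_neg (by omega)]
      have hz := card_zeros n δ hδ
      rw [hδs] at hz
      rw [hbl, h1, h2]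
      simp [show ¬(n+2 ≤ n) by omega, show ¬(n+2 = n+1) by omega]
      omega

lemma Tmat_row_beige (n K : ℕ) (hK : K ≤ n) (γ δ : ℕ → ℕ)
    (hγ : ∀ i ∈ Icc 1 n, γ i ≤ 1) (hδ : ∀ i ∈ Icc 1 n, δ i ≤ 1)
    (hδs : ∑ i ∈ Icc 1 n, δ i = n - K) :
    ∀ i ∈ Icc 1 (n+2), ((Icc 1 (n+2)).filter (fun j => Tmat n K γ δ i j = 2)).card
      = if i ≤ n then γ i else if i = n+1 then 2 else n-K+2 := by
  intro i hi
  rw [card_filter_split]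
  simp only [mem_Icc] at hi
  by_cases hin : i ≤ n
  · have hiI : i ∈ Icc 1 n := mem_Icc.2 ⟨hi.1, hin⟩
    have hbl : (Icc 1 n).filter (fun j => Tmat n K γ δ i j = 2) = ∅ := by
      apply filter_eq_empty_iff.2
      intro j hj
      have hjn := (mem_Icc.1 hj).2
      unfold Tmat
      rw [if_pos hin, if_pos hjn]
      intro h
      split_ifs at h <;> omega
    have h1 : Tmat n K γ δ i (n+1) = 0 := by
      unfold Tmat; rw [if_pos hin, if_neg (by omega), if_pos rfl]
    have h2 : Tmat n K γ δ i (n+2) = if γ i = 0 then 1 else 2 := by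
      unfold Tmat; rw [if_pos hin, if_neg (by omega), if_neg (by omega)]
    rw [hbl, h1, h2, if_pos hin]
    have hgle := hγ i hiI
    by_cases hg : γ i = 0 <;> simp [hg] <;> omega
  · by_cases hi1 : i = n+1
    · subst hi1
      have hbl : (Icc 1 n).filter (fun j => Tmat n K γ δ (n+1) j = 2) = ∅ := by
        apply filter_eq_empty_iff.2
        intro j hj
        have hjn := (mem_Icc.1 hj).2
        unfold Tmat
        rw [if_neg (show ¬(n+1 ≤ n) by omega), if_pos rfl, if_neg (show ¬(j = n+1 ∨ j = n+2) by omega)]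
        omega
      have h1 : Tmat n K γ δ (n+1) (n+1) = 2 := by
        unfold Tmat; rw [if_neg (by omega), if_pos rfl, if_pos (by omega)]
      have h2 : Tmat n K γ δ (n+1) (n+2) = 2 := by
        unfold Tmat; rw [if_neg (by omega), if_pos rfl, if_pos (by omega)]
      rw [hbl, h1, h2]
      simp [show ¬(n+1 ≤ n) by omega]
    · have hi2 : i = n+2 := by omega
      subst hi2
      have hbl : (Icc 1 n).filter (fun j => Tmat n K γ δ (n+2) j = 2)
          = (Icc 1 n).filter (fun j => δ j = 1) := by
        apply filter_congr
        intro j hj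
        have hjn := (mem_Icc.1 hj).2
        have := hδ j hj
        unfold Tmat
        rw [if_neg (by omega), if_neg (by omega), if_pos hjn]
        split_ifs <;> omega
      have h1 : Tmat n K γ δ (n+2) (n+1) = 2 := by
        unfold Tmat; rw [if_neg (by omega), if_neg (by omega), if_neg (by omega)]
      have h2 : Tmat n K γ δ (n+2) (n+2) = 2 := by
        unfold Tmat; rw [if_neg (by omega), if_neg (by omega), if_neg (by omega)]
      rw [hbl, h1, h2, card_ones n δ hδ, hδs]
      simp [show ¬(n+2 ≤ n) by omega, show ¬(n+2 = n+1) by omega]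

lemma sum_split_top (f : ℕ → ℕ) (a n : ℕ) (h : a ≤ n+1) :
    ∑ j ∈ Icc a (n+2), f j = ∑ j ∈ Icc a n, f j + f (n+1) + f (n+2) := by
  have e1 : Icc a (n+2) = insert (n+2) (insert (n+1) (Icc a n)) := by
    ext x; simp only [mem_Icc, mem_insert]; omega
  rw [e1, Finset.sum_insert (by simp only [mem_insert, mem_Icc]; omega),
    Finset.sum_insert (by simp only [mem_Icc]; omega)]
  ring

lemma filter_zero_mem {s : Finset ℕ} {p : ℕ → Prop} [DecidablePred p]
    (h : (s.filter p).card = 0) : ∀ x ∈ s, ¬ p x := by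
  intro x hx hp
  rw [card_eq_zero] at h
  have : x ∈ s.filter p := mem_filter.2 ⟨hx, hp⟩
  rw [h] at this
  exact notMem_empty x this

lemma two_filter_full {s : Finset ℕ} {p q : ℕ → Prop} [DecidablePred p] [DecidablePred q]
    (hpq : ∀ x, ¬(p x ∧ q x)) (hc : (s.filter p).card + (s.filter q).card = s.card) :
    ∀ x ∈ s, p x ∨ q x := by
  intro x hx
  have hdisj : Disjoint (s.filter p) (s.filter q) := by
    rw [Finset.disjoint_left]
    intro a ha1 ha2
    exact hpq a ⟨(mem_filter.1 ha1).2, (mem_filter.1 ha2).2⟩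
  have hsub : s.filter p ∪ s.filter q ⊆ s :=
    union_subset (filter_subset _ _) (filter_subset _ _)
  have heq := Finset.eq_of_subset_of_card_le hsub
    (by rw [Finset.card_union_of_disjoint hdisj, hc])
  rw [← heq] at hx
  rcases mem_union.1 hx with h | h
  · exact Or.inl (mem_filter.1 h).2
  · exact Or.inr (mem_filter.1 h).2

set_option maxHeartbeats 1000000 in
lemma necessity (n K : ℕ) (hK : K ≤ n) (γ δ : ℕ → ℕ)
    (hγ : ∀ i ∈ Icc 1 n, γ i ≤ 1) (hδ : ∀ i ∈ Icc 1 n, δ i ≤ 1)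
    (hγs : ∑ i ∈ Icc 1 n, γ i = n - K) (hδs : ∑ i ∈ Icc 1 n, δ i = n - K)
    (T : ℕ → ℕ → ℕ)
    (hxa : ∀ i ∈ Icc 1 (n+2), ((Icc 1 (n+2)).filter (fun j => T i j = 1)).card
      = if i ≤ n then i else if i = n+1 then 0 else K)
    (hya : ∀ j ∈ Icc 1 (n+2), ((Icc 1 (n+2)).filter (fun i => T i j = 1)).card
      = if j ≤ n then j else if j = n+1 then 0 else K)
    (hxb : ∀ i ∈ Icc 1 (n+2), ((Icc 1 (n+2)).filter (fun j => T i j = 2)).card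
      = if i ≤ n then γ i else if i = n+1 then 2 else n-K+2)
    (hyb : ∀ j ∈ Icc 1 (n+2), ((Icc 1 (n+2)).filter (fun i => T i j = 2)).card
      = if j ≤ n then δ j else if j = n+1 then 2 else n-K+2) :
    ∀ k ∈ Icc 1 n, ∑ j ∈ Icc (n-k+1) n, δ j ≤ ∑ i ∈ Icc 1 k, γ i := by
  have hn2E : (n+2) ∈ Icc 1 (n+2) := by simp [mem_Icc]
  have hn1E : (n+1) ∈ Icc 1 (n+2) := by simp [mem_Icc]
  -- row n+2 is full
  have hfull_row : ∀ j ∈ Icc 1 (n+2), T (n+2) j = 1 ∨ T (n+2) j = 2 := by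
    apply two_filter_full (fun x h => by omega)
    have h1 := hxa (n+2) hn2E
    have h2 := hxb (n+2) hn2E
    rw [if_neg (show ¬(n+2 ≤ n) by omega), if_neg (show ¬(n+2 = n+1) by omega)] at h1 h2
    rw [h1, h2, Nat.card_Icc]
    omega
  -- column n+2 is full
  have hfull_col : ∀ i ∈ Icc 1 (n+2), T i (n+2) = 1 ∨ T i (n+2) = 2 := by
    apply two_filter_full (fun x h => by omega)
    have h1 := hya (n+2) hn2E
    have h2 := hyb (n+2) hn2E
    rw [if_neg (show ¬(n+2 ≤ n) by omega), if_neg (show ¬(n+2 = n+1) by omega)] at h1 h2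
    rw [h1, h2, Nat.card_Icc]
    omega
  -- no azure in column n+1 / row n+1
  have noaz_col : ∀ i ∈ Icc 1 (n+2), ¬ T i (n+1) = 1 := by
    apply filter_zero_mem
    have h1 := hya (n+1) hn1E
    rw [if_neg (show ¬(n+1 ≤ n) by omega), if_pos rfl] at h1
    exact h1
  have noaz_row : ∀ j ∈ Icc 1 (n+2), ¬ T (n+1) j = 1 := by
    apply filter_zero_mem
    have h1 := hxa (n+1) hn1E
    rw [if_neg (show ¬(n+1 ≤ n) by omega), if_pos rfl] at h1
    exact h1
  have Tn2n1 : T (n+2) (n+1) = 2 :=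
    (hfull_row (n+1) hn1E).resolve_left (noaz_col (n+2) hn2E)
  have Tn1n2 : T (n+1) (n+2) = 2 :=
    (hfull_col (n+1) hn1E).resolve_left (noaz_row (n+2) hn2E)
  -- beige column counts
  have colbeige : ∀ j ∈ Icc 1 n, ((Icc 1 (n+2)).filter (fun i => T i j = 2)).card = δ j := by
    intro j hj
    have hjm := mem_Icc.1 hj
    have h1 := hyb j (by simp [mem_Icc]; omega)
    rw [if_pos hjm.2] at h1
    exact h1
  have rowbeige : ∀ i ∈ Icc 1 n, ((Icc 1 (n+2)).filter (fun j => T i j = 2)).card = γ i := by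
    intro i hi
    have him := mem_Icc.1 hi
    have h1 := hxb i (by simp [mem_Icc]; omega)
    rw [if_pos him.2] at h1
    exact h1
  have beige_delta : ∀ j ∈ Icc 1 n, T (n+2) j = 2 → δ j = 1 := by
    intro j hj h
    have hcb := colbeige j hj
    have hmem : (n+2) ∈ (Icc 1 (n+2)).filter (fun i => T i j = 2) := mem_filter.2 ⟨hn2E, h⟩
    have hpos : 0 < ((Icc 1 (n+2)).filter (fun i => T i j = 2)).card := card_pos.2 ⟨n+2, hmem⟩
    have := hδ j hj
    omega
  have beige_gamma : ∀ i ∈ Icc 1 n, T i (n+2) = 2 → γ i = 1 := by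
    intro i hi h
    have hcb := rowbeige i hi
    have hmem : (n+2) ∈ (Icc 1 (n+2)).filter (fun j => T i j = 2) := mem_filter.2 ⟨hn2E, h⟩
    have hpos : 0 < ((Icc 1 (n+2)).filter (fun j => T i j = 2)).card := card_pos.2 ⟨n+2, hmem⟩
    have := hγ i hi
    omega
  have hones : ((Icc 1 n).filter (fun j => δ j = 1)).card = n - K := by
    rw [card_ones n δ hδ, hδs]
  have hsubδ : (Icc 1 n).filter (fun j => T (n+2) j = 2) ⊆ (Icc 1 n).filter (fun j => δ j = 1) := by
    intro x hx
    have hx' := mem_filter.1 hx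
    exact mem_filter.2 ⟨hx'.1, beige_delta x hx'.1 hx'.2⟩
  -- (n+2,n+2) is beige
  have eps : T (n+2) (n+2) = 2 := by
    rcases hfull_row (n+2) hn2E with h | h
    · exfalso
      have hsplit := card_filter_split n (fun j => T (n+2) j = 2)
      have hv := hxb (n+2) hn2E
      rw [if_neg (show ¬(n+2 ≤ n) by omega), if_neg (show ¬(n+2 = n+1) by omega)] at hv
      rw [hv, if_pos Tn2n1, if_neg (show ¬ T (n+2) (n+2) = 2 by omega)] at hsplit
      have hcards := card_le_card hsubδ
      rw [hones] at hcards
      omega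
    · exact h
  -- characterize beige in row n+2
  have row_n2 : ∀ j ∈ Icc 1 n, (T (n+2) j = 2 ↔ δ j = 1) := by
    have hsplit := card_filter_split n (fun j => T (n+2) j = 2)
    have hv := hxb (n+2) hn2E
    rw [if_neg (show ¬(n+2 ≤ n) by omega), if_neg (show ¬(n+2 = n+1) by omega)] at hv
    rw [hv, if_pos Tn2n1, if_pos eps] at hsplit
    have heq := Finset.eq_of_subset_of_card_le hsubδ (by rw [hones]; omega)
    intro j hj
    constructor
    · exact beige_delta j hj
    · intro h
      have : j ∈ (Icc 1 n).filter (fun j => δ j = 1) := mem_filter.2 ⟨hj, h⟩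
      rw [← heq] at this
      exact (mem_filter.1 this).2
  -- characterize beige in column n+2
  have hgones : ((Icc 1 n).filter (fun i => γ i = 1)).card = n - K := by
    rw [card_ones n γ hγ, hγs]
  have hsubγ : (Icc 1 n).filter (fun i => T i (n+2) = 2) ⊆ (Icc 1 n).filter (fun i => γ i = 1) := by
    intro x hx
    have hx' := mem_filter.1 hx
    exact mem_filter.2 ⟨hx'.1, beige_gamma x hx'.1 hx'.2⟩
  have col_n2 : ∀ i ∈ Icc 1 n, (T i (n+2) = 2 ↔ γ i = 1) := by
    have hsplit := card_filter_split n (fun i => T i (n+2) = 2)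
    have hv := hyb (n+2) hn2E
    rw [if_neg (show ¬(n+2 ≤ n) by omega), if_neg (show ¬(n+2 = n+1) by omega)] at hv
    rw [hv, if_pos Tn1n2, if_pos eps] at hsplit
    have heq := Finset.eq_of_subset_of_card_le hsubγ (by rw [hgones]; omega)
    intro i hi
    constructor
    · exact beige_gamma i hi
    · intro h
      have : i ∈ (Icc 1 n).filter (fun i => γ i = 1) := mem_filter.2 ⟨hi, h⟩
      rw [← heq] at this
      exact (mem_filter.1 this).2
  -- no beige at (i, n+1) for i ≤ n
  have nobeige_coln1 : ∀ i ∈ Icc 1 n, ¬ T i (n+1) = 2 := by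
    intro i hi h
    have hiE : i ∈ Icc 1 (n+2) := by
      have := mem_Icc.1 hi; simp [mem_Icc]; omega
    have hrb := rowbeige i hi
    have hγi := hγ i hi
    by_cases hg : γ i = 1
    · have h2 : T i (n+2) = 2 := (col_n2 i hi).2 hg
      have hpair : ({n+1, n+2} : Finset ℕ) ⊆ (Icc 1 (n+2)).filter (fun j => T i j = 2) := by
        intro x hx
        simp only [mem_insert, mem_singleton] at hx
        rcases hx with rfl | rfl
        · exact mem_filter.2 ⟨hn1E, h⟩
        · exact mem_filter.2 ⟨hn2E, h2⟩
      have hcc := card_le_card hpair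
      have hpc : ({n+1, n+2} : Finset ℕ).card = 2 := by
        rw [card_insert_of_notMem (by simp), card_singleton]
      omega
    · have h0 : γ i = 0 := by omega
      have hzero : ((Icc 1 (n+2)).filter (fun j => T i j = 2)).card = 0 := by rw [hrb, h0]
      exact filter_zero_mem hzero (n+1) hn1E h
  -- main counting argument
  intro k hk
  have hkm := mem_Icc.1 hk
  obtain ⟨m, hm⟩ : ∃ m, n = k + m := ⟨n - k, by omega⟩
  set E := Icc 1 (n+2) with hE
  set C := Icc (n-k+1) (n+2) with hC
  have hCE : C ⊆ E := Icc_subset_Icc (by omega) le_rfl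
  set F : ℕ → ℕ → ℕ := fun i j => (if T i j = 1 then 1 else 0) + (if T i j = 2 then 1 else 0)
    with hF
  have hFle1 : ∀ i j, F i j ≤ 1 := by
    intro i j
    simp only [hF]
    split_ifs <;> omega
  have hrowsum : ∀ i ∈ E, ∑ j ∈ E, F i j
      = ((E.filter (fun j => T i j = 1)).card + (E.filter (fun j => T i j = 2)).card) := by
    intro i _
    rw [card_filter, card_filter, ← Finset.sum_add_distrib]
  -- the total over C, computed by columns
  have hcolval : ∀ j ∈ Icc (n-k+1) n,
      ((E.filter (fun i => T i j = 1)).card + (E.filter (fun i => T i j = 2)).card)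
        = j + δ j := by
    intro j hj
    have hjm := mem_Icc.1 hj
    have hjE : j ∈ E := by simp only [hE, mem_Icc]; omega
    rw [hya j hjE, hyb j hjE, if_pos (show j ≤ n by omega), if_pos (show j ≤ n by omega)]
  have hN : ∑ j ∈ C, ((E.filter (fun i => T i j = 1)).card + (E.filter (fun i => T i j = 2)).card)
      = (∑ j ∈ Icc (n-k+1) n, j) + (∑ j ∈ Icc (n-k+1) n, δ j) + 2 + (K + (n-K+2)) := by
    rw [hC, sum_split_top _ _ _ (by omega)]
    rw [Finset.sum_congr rfl hcolval, Finset.sum_add_distrib]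
    have e1 := hya (n+1) hn1E
    have e2 := hyb (n+1) hn1E
    have e3 := hya (n+2) hn2E
    have e4 := hyb (n+2) hn2E
    rw [if_neg (show ¬(n+1 ≤ n) by omega), if_pos rfl] at e1 e2
    rw [if_neg (show ¬(n+2 ≤ n) by omega), if_neg (show ¬(n+2 = n+1) by omega)] at e3 e4
    rw [e1, e2, e3, e4]
  -- double counting
  have hdouble : ∑ j ∈ C, ((E.filter (fun i => T i j = 1)).card + (E.filter (fun i => T i j = 2)).card)
      = ∑ i ∈ E, ∑ j ∈ C, F i j := by
    have : ∀ j ∈ C, ((E.filter (fun i => T i j = 1)).card + (E.filter (fun i => T i j = 2)).card)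
        = ∑ i ∈ E, F i j := by
      intro j _
      rw [card_filter, card_filter, ← Finset.sum_add_distrib]
    rw [Finset.sum_congr rfl this, Finset.sum_comm]
  -- row bounds
  have hb1 : ∀ i ∈ Icc 1 k, ∑ j ∈ C, F i j ≤ i + γ i := by
    intro i hi
    have him := mem_Icc.1 hi
    have hiE : i ∈ E := by simp only [hE, mem_Icc]; omega
    calc ∑ j ∈ C, F i j ≤ ∑ j ∈ E, F i j :=
          Finset.sum_le_sum_of_subset hCE
      _ = _ := hrowsum i hiE
      _ ≤ i + γ i := by
          have e1 := hxa i hiE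
          have e2 := hxb i hiE
          rw [if_pos (show i ≤ n by omega)] at e1
          rw [if_pos (show i ≤ n by omega)] at e2
          omega
  have hb2 : ∀ i ∈ Icc (k+1) n, ∑ j ∈ C, F i j ≤ k + 1 := by
    intro i hi
    have him := mem_Icc.1 hi
    have hiE : i ∈ E := by simp only [hE, mem_Icc]; omega
    have hiI : i ∈ Icc 1 n := by simp only [mem_Icc]; omega
    have hFn1 : F i (n+1) = 0 := by
      simp only [hF]
      rw [if_neg (noaz_col i hiE), if_neg (nobeige_coln1 i hiI)]
    have hn1C : (n+1) ∈ C := by simp only [hC, mem_Icc]; omega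
    have hsplit := Finset.sum_erase_add C (F i) hn1C
    have hbound : ∑ j ∈ C.erase (n+1), F i j ≤ (C.erase (n+1)).card * 1 := by
      apply Finset.sum_le_card_nsmul
      intro j _
      exact hFle1 i j
    have hcerase : (C.erase (n+1)).card = k + 1 := by
      rw [card_erase_of_mem hn1C, hC, Nat.card_Icc]
      omega
    omega
  have hb3 : ∑ j ∈ C, F (n+1) j ≤ 2 := by
    calc ∑ j ∈ C, F (n+1) j ≤ ∑ j ∈ E, F (n+1) j := Finset.sum_le_sum_of_subset hCE
      _ = _ := hrowsum (n+1) hn1E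
      _ ≤ 2 := by
          have e1 := hxa (n+1) hn1E
          have e2 := hxb (n+1) hn1E
          rw [if_neg (show ¬(n+1 ≤ n) by omega), if_pos rfl] at e1
          rw [if_neg (show ¬(n+1 ≤ n) by omega), if_pos rfl] at e2
          omega
  have hb4 : ∑ j ∈ C, F (n+2) j ≤ k + 2 := by
    have hbound : ∑ j ∈ C, F (n+2) j ≤ C.card * 1 := by
      apply Finset.sum_le_card_nsmul
      intro j _
      exact hFle1 (n+2) j
    have : C.card = k + 2 := by rw [hC, Nat.card_Icc]; omega
    omega
  -- assemble the upper bound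
  have hEsplit : ∑ i ∈ E, ∑ j ∈ C, F i j
      = ∑ i ∈ Icc 1 n, (∑ j ∈ C, F i j) + (∑ j ∈ C, F (n+1) j) + (∑ j ∈ C, F (n+2) j) := by
    rw [hE, sum_split_top _ _ _ (by omega)]
  have hnsplit : ∑ i ∈ Icc 1 k, (∑ j ∈ C, F i j) + ∑ i ∈ Icc (k+1) n, (∑ j ∈ C, F i j)
      = ∑ i ∈ Icc 1 n, (∑ j ∈ C, F i j) := sum_split _ k n (by omega)
  have hs1 : ∑ i ∈ Icc 1 k, (∑ j ∈ C, F i j) ≤ (∑ i ∈ Icc 1 k, i) + (∑ i ∈ Icc 1 k, γ i) := by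
    rw [← Finset.sum_add_distrib]
    exact Finset.sum_le_sum hb1
  have hs2 : ∑ i ∈ Icc (k+1) n, (∑ j ∈ C, F i j) ≤ m * (k+1) := by
    have hbound := Finset.sum_le_card_nsmul (Icc (k+1) n) (fun i => ∑ j ∈ C, F i j) (k+1) hb2
    have hcard : (Icc (k+1) n).card = m := by rw [Nat.card_Icc]; omega
    rw [hcard, smul_eq_mul] at hbound
    exact hbound
  -- final arithmetic
  have hineq : (∑ j ∈ Icc (n-k+1) n, j) + (∑ j ∈ Icc (n-k+1) n, δ j) + 2 + (K + (n-K+2))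
      ≤ (∑ i ∈ Icc 1 k, i) + (∑ i ∈ Icc 1 k, γ i) + m * (k+1) + 2 + (k+2) := by
    rw [← hN]
    rw [hdouble, hEsplit, ← hnsplit]
    linarith [hs1, hs2, hb3, hb4]
  have g1 := gauss k
  have g2 := gauss m
  have g3 := gauss (k+m)
  have s3 : ∑ i ∈ Icc 1 m, i + ∑ i ∈ Icc (m+1) (k+m), i = ∑ i ∈ Icc 1 (k+m), i := by
    have := sum_split (fun i => i) m (k+m) (by omega)
    simpa using this
  have hnk : n - k = m := by omega
  rw [hnk] at hineq
  rw [hm] at hineq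
  have hsub2 : K + (k + m - K + 2) = k + m + 2 := by omega
  rw [hsub2] at hineq
  rw [hnk, hm]
  nlinarith [hineq, g1, g2, g3, s3]

lemma maj_swap (n K : ℕ) (hK : K ≤ n) (γ δ : ℕ → ℕ)
    (hγs : ∑ i ∈ Icc 1 n, γ i = n - K) (hδs : ∑ i ∈ Icc 1 n, δ i = n - K)
    (majI : ∀ k ∈ Icc 1 n, ∑ j ∈ Icc (n-k+1) n, δ j ≤ ∑ i ∈ Icc 1 k, γ i) :
    ∀ k ∈ Icc 1 n, ∑ j ∈ Icc (n-k+1) n, γ j ≤ ∑ i ∈ Icc 1 k, δ i := by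
  intro k hk
  have hkm := mem_Icc.1 hk
  by_cases hkn : k = n
  · have e : n - k + 1 = 1 := by omega
    rw [e, hkn, hγs, hδs]
  · have hkk : n - k ∈ Icc 1 n := by simp only [mem_Icc]; omega
    have h1 := majI (n-k) hkk
    have e : n - (n-k) + 1 = k + 1 := by omega
    rw [e] at h1
    have h2 := sum_split γ (n-k) n (by omega)
    have h3 := sum_split δ k n (by omega)
    rw [hγs] at h2
    rw [hδs] at h3
    omega

/-- Let γ, δ be 0-1 vectors of length n, both with total sum
n−K (0 ≤ K ≤ n). The (n+2)×(n+2) azure skew mirror instance ASM(γ,δ) of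
3-CCP is consistent iff γ ⪰ δ^R. Colors: 1 = azure, 2 = beige, 3 = cyan,
0 = blank. Azure sums: i for i ≤ n, 0 for i = n+1, K for i = n+2; beige sums:
γ_i (resp. δ_i) for i ≤ n, 2 for i = n+1, n−K+2 for i = n+2; cyan sums 0. -/
theorem stmt_17 (n K : ℕ) (hK : K ≤ n) (γ δ : ℕ → ℕ)
    (hγ : ∀ i ∈ Finset.Icc 1 n, γ i ≤ 1)
    (hδ : ∀ i ∈ Finset.Icc 1 n, δ i ≤ 1)
    (hγs : ∑ i ∈ Finset.Icc 1 n, γ i = n - K)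
    (hδs : ∑ i ∈ Finset.Icc 1 n, δ i = n - K)
    (xA yA xB yB : ℕ → ℕ)
    (hxA : ∀ i ∈ Finset.Icc 1 (n+2), xA i =
      if i ≤ n then i else if i = n + 1 then 0 else K)
    (hyA : ∀ i ∈ Finset.Icc 1 (n+2), yA i =
      if i ≤ n then i else if i = n + 1 then 0 else K)
    (hxB : ∀ i ∈ Finset.Icc 1 (n+2), xB i =
      if i ≤ n then γ i else if i = n + 1 then 2 else n - K + 2)
    (hyB : ∀ i ∈ Finset.Icc 1 (n+2), yB i =
      if i ≤ n then δ i else if i = n + 1 then 2 else n - K + 2) :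
    (∃ T : ℕ → ℕ → ℕ,
      (∀ i ∈ Finset.Icc 1 (n+2), ∀ j ∈ Finset.Icc 1 (n+2), T i j ≤ 3) ∧
      (∀ i ∈ Finset.Icc 1 (n+2),
        ((Finset.Icc 1 (n+2)).filter (fun j => T i j = 1)).card = xA i) ∧
      (∀ j ∈ Finset.Icc 1 (n+2),
        ((Finset.Icc 1 (n+2)).filter (fun i => T i j = 1)).card = yA j) ∧
      (∀ i ∈ Finset.Icc 1 (n+2),
        ((Finset.Icc 1 (n+2)).filter (fun j => T i j = 2)).card = xB i) ∧
      (∀ j ∈ Finset.Icc 1 (n+2),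
        ((Finset.Icc 1 (n+2)).filter (fun i => T i j = 2)).card = yB j) ∧
      (∀ i ∈ Finset.Icc 1 (n+2),
        ((Finset.Icc 1 (n+2)).filter (fun j => T i j = 3)).card = 0) ∧
      (∀ j ∈ Finset.Icc 1 (n+2),
        ((Finset.Icc 1 (n+2)).filter (fun i => T i j = 3)).card = 0)) ↔
    (∀ k ∈ Finset.Icc 1 n,
      ∑ i ∈ Finset.Icc 1 k, δ (n - i + 1) ≤ ∑ i ∈ Finset.Icc 1 k, γ i) := by
  constructor
  · rintro ⟨T, _hle, hxa, hya, hxb, hyb, _, _⟩ k hk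
    have hxa' : ∀ i ∈ Icc 1 (n+2), ((Icc 1 (n+2)).filter (fun j => T i j = 1)).card
        = if i ≤ n then i else if i = n+1 then 0 else K :=
      fun i hi => (hxa i hi).trans (hxA i hi)
    have hya' : ∀ j ∈ Icc 1 (n+2), ((Icc 1 (n+2)).filter (fun i => T i j = 1)).card
        = if j ≤ n then j else if j = n+1 then 0 else K :=
      fun j hj => (hya j hj).trans (hyA j hj)
    have hxb' : ∀ i ∈ Icc 1 (n+2), ((Icc 1 (n+2)).filter (fun j => T i j = 2)).card
        = if i ≤ n then γ i else if i = n+1 then 2 else n-K+2 :=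
      fun i hi => (hxb i hi).trans (hxB i hi)
    have hyb' : ∀ j ∈ Icc 1 (n+2), ((Icc 1 (n+2)).filter (fun i => T i j = 2)).card
        = if j ≤ n then δ j else if j = n+1 then 2 else n-K+2 :=
      fun j hj => (hyb j hj).trans (hyB j hj)
    rw [sum_rev δ n k (mem_Icc.1 hk).2]
    exact necessity n K hK γ δ hγ hδ hγs hδs T hxa' hya' hxb' hyb' k hk
  · intro maj
    have majI : ∀ k ∈ Icc 1 n, ∑ j ∈ Icc (n-k+1) n, δ j ≤ ∑ i ∈ Icc 1 k, γ i := by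
      intro k hk
      rw [← sum_rev δ n k (mem_Icc.1 hk).2]
      exact maj k hk
    have majS := maj_swap n K hK γ δ hγs hδs majI
    refine ⟨Tmat n K γ δ, fun i _ j _ => Tmat_le3 n K γ δ i j, ?_, ?_, ?_, ?_, ?_, ?_⟩
    · intro i hi
      rw [hxA i hi]
      exact Tmat_row_azure n K hK γ δ hγ hδ hγs hδs majI i hi
    · intro j hj
      rw [hyA j hj]
      have hcong : (Icc 1 (n+2)).filter (fun i => Tmat n K γ δ i j = 1)
          = (Icc 1 (n+2)).filter (fun i => Tmat n K δ γ j i = 1) :=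
        filter_congr (fun i hi => by rw [Tmat_trans n K γ δ hi hj])
      rw [hcong]
      exact Tmat_row_azure n K hK δ γ hδ hγ hδs hγs majS j hj
    · intro i hi
      rw [hxB i hi]
      exact Tmat_row_beige n K hK γ δ hγ hδ hδs i hi
    · intro j hj
      rw [hyB j hj]
      have hcong : (Icc 1 (n+2)).filter (fun i => Tmat n K γ δ i j = 2)
          = (Icc 1 (n+2)).filter (fun i => Tmat n K δ γ j i = 2) :=
        filter_congr (fun i hi => by rw [Tmat_trans n K γ δ hi hj])
      rw [hcong]
      exact Tmat_row_beige n K hK δ γ hδ hγ hγs j hj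
    · intro i _
      rw [Finset.card_eq_zero, Finset.filter_eq_empty_iff]
      intro j _
      exact Tmat_ne3 n K γ δ i j
    · intro j _
      rw [Finset.card_eq_zero, Finset.filter_eq_empty_iff]
      intro i _
      exact Tmat_ne3 n K γ δ i j
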